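/- Let J, W ⊆ ℝ be open sets, let a : J → ℝ be differentiable with a(R) ≠ 0 on J, and let b : J → ℝ be twice differentiable with b'(R) ≠ 0 on J. On the set D := {(R,w) ∈ J × W : 1 + b(R)w ≠ 0 and 1 + (b(R) − Rb'(R))w ≠ 0}, define α(R,w) := (1 + (b(R) − Rb'(R))w)/(1 + b(R)w), π := a(R)/α(R,w) − 1 and χ := π − (R/(3a(R)))·∂_R(a(R)/α(R,w)), where ∂_R is the partial derivative with respect to the first variable. Then on D: χ = π + 1/3 + (1/3)(π+1)·[(π+1)·A₁(R) + A₂(R)], where A₁(R) := −R·b''(R)/(a(R)²·b'(R)) and A₂(R) := R·b''(R)/(a(R)·b'(R)) − R·a'(R)/a(R)² − 1/a(R). -/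

import Mathlib

noncomputable section

/-- The metric function `α` of a thermodynamic Stephani universe, as a function of `R`
for fixed `w`. -/
def alphaS (b : ℝ → ℝ) (w : ℝ) : ℝ → ℝ :=
  fun R => (1 + (b R - R * deriv b R) * w) / (1 + b R * w)

/-- The hydrodynamic quantity `π = p/ρ = a/α − 1` of a thermodynamic Stephani universe. -/
def piS (a b : ℝ → ℝ) (w R : ℝ) : ℝ := a R / alphaS b w R - 1

/-- The square of the speed of sound `χ = π − (R/(3a)) ∂_R(a/α)` of a thermodynamic
Stephani universe. -/
def chiS (a b : ℝ → ℝ) (w R : ℝ) : ℝ :=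
  piS a b w R - R / (3 * a R) * deriv (fun R' => a R' / alphaS b w R') R

/-- The indicatrix of a thermodynamic Stephani universe:
`χ = π + 1/3 + (1/3)(π+1)[(π+1)A₁(R) + A₂(R)]` with
`A₁ = −Rb''/(a²b')` and `A₂ = Rb''/(ab') − Ra'/a² − 1/a`. -/
theorem stephani_indicatrix
    (J W : Set ℝ) (hJ : IsOpen J) (hW : IsOpen W)
    (a b : ℝ → ℝ)
    (ha : ∀ R ∈ J, DifferentiableAt ℝ a R)
    (ha0 : ∀ R ∈ J, a R ≠ 0)
    (hb : ∀ R ∈ J, DifferentiableAt ℝ b R ∧ DifferentiableAt ℝ (deriv b) R)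
    (hb' : ∀ R ∈ J, deriv b R ≠ 0) :
    ∀ R w : ℝ, R ∈ J → w ∈ W →
      1 + b R * w ≠ 0 → 1 + (b R - R * deriv b R) * w ≠ 0 →
      chiS a b w R
        = piS a b w R + 1 / 3
          + 1 / 3 * (piS a b w R + 1)
            * ((piS a b w R + 1) * (-(R * deriv (deriv b) R) / (a R ^ 2 * deriv b R))
              + (R * deriv (deriv b) R / (a R * deriv b R)
                  - R * deriv a R / a R ^ 2 - 1 / a R)) := by
  intro R w hR _hw hu hv
  have haR := (ha R hR).hasDerivAt
  have hbR := ((hb R hR).1).hasDerivAt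
  have hbbR := ((hb R hR).2).hasDerivAt
  have ha0R := ha0 R hR
  have hb'R := hb' R hR
  -- derivative of the numerator factor u = 1 + b w
  have hU : HasDerivAt (fun R' => 1 + b R' * w) (deriv b R * w) R :=
    (hbR.mul_const w).const_add 1
  -- derivative of denominator v = 1 + (b - R b') w
  have hV : HasDerivAt (fun R' => 1 + (b R' - R' * deriv b R') * w)
      (-(R * deriv (deriv b) R) * w) R := by
    have h := ((hbR.sub ((hasDerivAt_id R).mul hbbR)).mul_const w).const_add 1
    refine h.congr_deriv ?_
    simp only [id_eq]
    ring
  have hAU : HasDerivAt (fun R' => a R' * (1 + b R' * w))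
      (deriv a R * (1 + b R * w) + a R * (deriv b R * w)) R := haR.mul hU
  have hf : HasDerivAt (fun R' => a R' * (1 + b R' * w) / (1 + (b R' - R' * deriv b R') * w))
      (((deriv a R * (1 + b R * w) + a R * (deriv b R * w)) *
          (1 + (b R - R * deriv b R) * w) -
        a R * (1 + b R * w) * (-(R * deriv (deriv b) R) * w)) /
        (1 + (b R - R * deriv b R) * w) ^ 2) R := hAU.div hV hv
  have heq : (fun R' => a R' / alphaS b w R')
      = fun R' => a R' * (1 + b R' * w) / (1 + (b R' - R' * deriv b R') * w) := by
    funext R'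
    simp [alphaS, div_div_eq_mul_div]
  rw [chiS, heq, hf.deriv, piS, alphaS]
  rw [div_div_eq_mul_div]
  have hv' : 1 + w * (b R - R * deriv b R) ≠ 0 := by rwa [mul_comm]
  field_simp
  ring
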